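/- The Cayley hyperdeterminant Δ is a relative invariant of the SLOCC action: for every ψ ∈ ℂ² ⊗ ℂ² ⊗ ℂ² and all invertible 2×2 complex matrices g₁, g₂, g₃, one has Δ((g₁ ⊗ g₂ ⊗ g₃)(ψ)) = (det g₁)² (det g₂)² (det g₃)² · Δ(ψ). In particular Δ is invariant under SL₂(ℂ) × SL₂(ℂ) × SL₂(ℂ). -/

import Mathlib

open TensorProduct

noncomputable section

/-- The single-qubit space ℂ². -/
abbrev Qubit : Type := Fin 2 → ℂ

/-- The three-qubit Hilbert space ℂ² ⊗ ℂ² ⊗ ℂ². -/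
abbrev ThreeQubit : Type := Qubit ⊗[ℂ] (Qubit ⊗[ℂ] Qubit)

/-- Standard basis vector e₀ of ℂ². -/
def e0 : Qubit := ![1, 0]

/-- Standard basis vector e₁ of ℂ². -/
def e1 : Qubit := ![0, 1]

/-- SLOCC equivalence: ψ and φ are related by invertible local linear maps. -/
def SLOCC (ψ φ : ThreeQubit) : Prop :=
  ∃ g₁ g₂ g₃ : Qubit ≃ₗ[ℂ] Qubit,
    TensorProduct.map g₁.toLinearMap
      (TensorProduct.map g₂.toLinearMap g₃.toLinearMap) ψ = φ

def SepState : ThreeQubit := e0 ⊗ₜ[ℂ] (e0 ⊗ₜ[ℂ] e0)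
def B1 : ThreeQubit := e0 ⊗ₜ[ℂ] (e0 ⊗ₜ[ℂ] e0) + e0 ⊗ₜ[ℂ] (e1 ⊗ₜ[ℂ] e1)
def B2 : ThreeQubit := e0 ⊗ₜ[ℂ] (e0 ⊗ₜ[ℂ] e0) + e1 ⊗ₜ[ℂ] (e0 ⊗ₜ[ℂ] e1)
def B3 : ThreeQubit := e0 ⊗ₜ[ℂ] (e0 ⊗ₜ[ℂ] e0) + e1 ⊗ₜ[ℂ] (e1 ⊗ₜ[ℂ] e0)
def W : ThreeQubit := e1 ⊗ₜ[ℂ] (e0 ⊗ₜ[ℂ] e0) + e0 ⊗ₜ[ℂ] (e1 ⊗ₜ[ℂ] e0) + e0 ⊗ₜ[ℂ] (e0 ⊗ₜ[ℂ] e1)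
def GHZ : ThreeQubit := e0 ⊗ₜ[ℂ] (e0 ⊗ₜ[ℂ] e0) + e1 ⊗ₜ[ℂ] (e1 ⊗ₜ[ℂ] e1)

/-- The standard basis e_i ⊗ e_j ⊗ e_k of the three-qubit space. -/
def stdBasis : Module.Basis (Fin 2 × Fin 2 × Fin 2) ℂ ThreeQubit :=
  (Pi.basisFun ℂ (Fin 2)).tensorProduct
    ((Pi.basisFun ℂ (Fin 2)).tensorProduct (Pi.basisFun ℂ (Fin 2)))

/-- Cayley's hyperdeterminant, written in the coordinates a_{ijk} of ψ with respect to
the standard basis e_i⊗e_j⊗e_k. -/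
def Δ (ψ : ThreeQubit) : ℂ :=
  let a : Fin 2 → Fin 2 → Fin 2 → ℂ := fun i j k => stdBasis.repr ψ (i, j, k)
  a 0 0 0 ^ 2 * a 1 1 1 ^ 2 + a 0 0 1 ^ 2 * a 1 1 0 ^ 2
    + a 0 1 0 ^ 2 * a 1 0 1 ^ 2 + a 1 0 0 ^ 2 * a 0 1 1 ^ 2
    - 2 * (a 0 0 0 * a 0 0 1 * a 1 1 0 * a 1 1 1
         + a 0 0 0 * a 0 1 0 * a 1 0 1 * a 1 1 1
         + a 0 0 0 * a 0 1 1 * a 1 0 0 * a 1 1 1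
         + a 0 0 1 * a 0 1 0 * a 1 0 1 * a 1 1 0
         + a 0 0 1 * a 0 1 1 * a 1 1 0 * a 1 0 0
         + a 0 1 0 * a 0 1 1 * a 1 0 1 * a 1 0 0)
    + 4 * (a 0 0 0 * a 0 1 1 * a 1 0 1 * a 1 1 0
         + a 0 0 1 * a 0 1 0 * a 1 0 0 * a 1 1 1)

lemma repr_tmul' (x y z : Qubit) (i j k : Fin 2) :
    stdBasis.repr (x ⊗ₜ[ℂ] (y ⊗ₜ[ℂ] z)) (i, j, k) = x i * (y j * z k) := by
  simp [stdBasis, Module.Basis.tensorProduct_repr_tmul_apply]; ring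

lemma repr_zero' (i j k : Fin 2) : stdBasis.repr (0 : ThreeQubit) (i, j, k) = 0 := by
  rw [LinearEquiv.map_zero]; rfl

lemma repr_add' (x y : ThreeQubit) (i j k : Fin 2) :
    stdBasis.repr (x + y) (i, j, k) = stdBasis.repr x (i, j, k) + stdBasis.repr y (i, j, k) := by
  rw [LinearEquiv.map_add]; rfl

lemma toLin'_apply2 (g : Matrix (Fin 2) (Fin 2) ℂ) (x : Qubit) (i : Fin 2) :
    Matrix.toLin' g x i = g i 0 * x 0 + g i 1 * x 1 := by
  simp [Matrix.toLin'_apply, Matrix.mulVec, dotProduct, Fin.sum_univ_two]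

lemma coord1 (g : Matrix (Fin 2) (Fin 2) ℂ) (ψ : ThreeQubit) (i j k : Fin 2) :
    stdBasis.repr (TensorProduct.map (Matrix.toLin' g) LinearMap.id ψ) (i, j, k)
      = g i 0 * stdBasis.repr ψ (0, j, k) + g i 1 * stdBasis.repr ψ (1, j, k) := by
  induction ψ using TensorProduct.induction_on with
  | zero => rw [LinearMap.map_zero, repr_zero', repr_zero', repr_zero']; ring
  | add x y hx hy => rw [LinearMap.map_add, repr_add', repr_add', repr_add', hx, hy]; ring
  | tmul x yz =>
    rw [TensorProduct.map_tmul, LinearMap.id_apply]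
    induction yz using TensorProduct.induction_on with
    | zero => rw [tmul_zero, repr_zero', tmul_zero, repr_zero', repr_zero']; ring
    | add u v hu hv =>
      rw [tmul_add, tmul_add, repr_add', repr_add', repr_add', hu, hv]; ring
    | tmul y z =>
      rw [repr_tmul', repr_tmul', repr_tmul', toLin'_apply2]; ring

lemma coord2 (g : Matrix (Fin 2) (Fin 2) ℂ) (ψ : ThreeQubit) (i j k : Fin 2) :
    stdBasis.repr (TensorProduct.map LinearMap.id
        (TensorProduct.map (Matrix.toLin' g) LinearMap.id) ψ) (i, j, k)
      = g j 0 * stdBasis.repr ψ (i, 0, k) + g j 1 * stdBasis.repr ψ (i, 1, k) := by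
  induction ψ using TensorProduct.induction_on with
  | zero => rw [LinearMap.map_zero, repr_zero', repr_zero', repr_zero']; ring
  | add x y hx hy => rw [LinearMap.map_add, repr_add', repr_add', repr_add', hx, hy]; ring
  | tmul x yz =>
    rw [TensorProduct.map_tmul, LinearMap.id_apply]
    induction yz using TensorProduct.induction_on with
    | zero => rw [LinearMap.map_zero, tmul_zero, repr_zero', repr_zero', repr_zero']; ring
    | add u v hu hv =>
      rw [LinearMap.map_add, tmul_add, tmul_add, repr_add', repr_add', repr_add', hu, hv]; ring
    | tmul y z =>
      rw [TensorProduct.map_tmul, LinearMap.id_apply, repr_tmul', repr_tmul', repr_tmul',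
        toLin'_apply2]; ring

lemma coord3 (g : Matrix (Fin 2) (Fin 2) ℂ) (ψ : ThreeQubit) (i j k : Fin 2) :
    stdBasis.repr (TensorProduct.map LinearMap.id
        (TensorProduct.map LinearMap.id (Matrix.toLin' g)) ψ) (i, j, k)
      = g k 0 * stdBasis.repr ψ (i, j, 0) + g k 1 * stdBasis.repr ψ (i, j, 1) := by
  induction ψ using TensorProduct.induction_on with
  | zero => rw [LinearMap.map_zero, repr_zero', repr_zero', repr_zero']; ring
  | add x y hx hy => rw [LinearMap.map_add, repr_add', repr_add', repr_add', hx, hy]; ring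
  | tmul x yz =>
    rw [TensorProduct.map_tmul, LinearMap.id_apply]
    induction yz using TensorProduct.induction_on with
    | zero => rw [LinearMap.map_zero, tmul_zero, repr_zero', repr_zero', repr_zero']; ring
    | add u v hu hv =>
      rw [LinearMap.map_add, tmul_add, tmul_add, repr_add', repr_add', repr_add', hu, hv]; ring
    | tmul y z =>
      rw [TensorProduct.map_tmul, LinearMap.id_apply, repr_tmul', repr_tmul', repr_tmul',
        toLin'_apply2]; ring

lemma slot1 (g : Matrix (Fin 2) (Fin 2) ℂ) (ψ : ThreeQubit) :
    Δ (TensorProduct.map (Matrix.toLin' g) LinearMap.id ψ) = g.det ^ 2 * Δ ψ := by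
  simp only [Δ, coord1, Matrix.det_fin_two]; ring

lemma slot2 (g : Matrix (Fin 2) (Fin 2) ℂ) (ψ : ThreeQubit) :
    Δ (TensorProduct.map LinearMap.id
        (TensorProduct.map (Matrix.toLin' g) LinearMap.id) ψ) = g.det ^ 2 * Δ ψ := by
  simp only [Δ, coord2, Matrix.det_fin_two]; ring

lemma slot3 (g : Matrix (Fin 2) (Fin 2) ℂ) (ψ : ThreeQubit) :
    Δ (TensorProduct.map LinearMap.id
        (TensorProduct.map LinearMap.id (Matrix.toLin' g)) ψ) = g.det ^ 2 * Δ ψ := by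
  simp only [Δ, coord3, Matrix.det_fin_two]; ring

lemma factorSplit (g₁ g₂ g₃ : Matrix (Fin 2) (Fin 2) ℂ) (ψ : ThreeQubit) :
    TensorProduct.map (Matrix.toLin' g₁)
      (TensorProduct.map (Matrix.toLin' g₂) (Matrix.toLin' g₃)) ψ
    = TensorProduct.map (Matrix.toLin' g₁) LinearMap.id
        (TensorProduct.map LinearMap.id (TensorProduct.map (Matrix.toLin' g₂) LinearMap.id)
          (TensorProduct.map LinearMap.id
            (TensorProduct.map LinearMap.id (Matrix.toLin' g₃)) ψ)) := by
  have h : TensorProduct.map (Matrix.toLin' g₁)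
      (TensorProduct.map (Matrix.toLin' g₂) (Matrix.toLin' g₃))
    = (TensorProduct.map (Matrix.toLin' g₁) LinearMap.id).comp
        ((TensorProduct.map LinearMap.id
            (TensorProduct.map (Matrix.toLin' g₂) LinearMap.id)).comp
          (TensorProduct.map LinearMap.id
            (TensorProduct.map LinearMap.id (Matrix.toLin' g₃)))) := by
    simp [← TensorProduct.map_comp]
  rw [h]; rfl

lemma Δ_main (ψ : ThreeQubit) (g₁ g₂ g₃ : Matrix (Fin 2) (Fin 2) ℂ) :
    Δ (TensorProduct.map (Matrix.toLin' g₁)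
        (TensorProduct.map (Matrix.toLin' g₂) (Matrix.toLin' g₃)) ψ)
      = g₁.det ^ 2 * g₂.det ^ 2 * g₃.det ^ 2 * Δ ψ := by
  rw [factorSplit, slot1, slot2, slot3]; ring


/-- Cayley's hyperdeterminant is a relative SLOCC invariant of weight (2,2,2):
under invertible local matrices it rescales by the squared determinants. In particular
it is invariant under SL₂(ℂ) × SL₂(ℂ) × SL₂(ℂ). -/
theorem hyperdeterminant_relative_invariant :
    (∀ (ψ : ThreeQubit) (g₁ g₂ g₃ : Matrix (Fin 2) (Fin 2) ℂ),
        IsUnit g₁.det → IsUnit g₂.det → IsUnit g₃.det →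
        Δ (TensorProduct.map (Matrix.toLin' g₁)
            (TensorProduct.map (Matrix.toLin' g₂) (Matrix.toLin' g₃)) ψ)
          = g₁.det ^ 2 * g₂.det ^ 2 * g₃.det ^ 2 * Δ ψ) ∧
    (∀ (ψ : ThreeQubit) (g₁ g₂ g₃ : Matrix (Fin 2) (Fin 2) ℂ),
        g₁.det = 1 → g₂.det = 1 → g₃.det = 1 →
        Δ (TensorProduct.map (Matrix.toLin' g₁)
            (TensorProduct.map (Matrix.toLin' g₂) (Matrix.toLin' g₃)) ψ) = Δ ψ) := by
  constructor
  · intro ψ g₁ g₂ g₃ _ _ _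
    exact Δ_main ψ g₁ g₂ g₃
  · intro ψ g₁ g₂ g₃ h1 h2 h3
    rw [Δ_main ψ g₁ g₂ g₃, h1, h2, h3]
    ring

end
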